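/- Let X be a real random variable with Gaussian law of mean m ∈ ℝ and variance v > 0, let α > 0, and define the penalized objective f_α(y) = (m − y)² + v + α·g(y) with g(y) = E[(X − y)² | X > y]. Then every global minimizer y* of f_α satisfies y* > m; that is, under a strictly positive undersupply penalty the optimal output lies strictly above the mean demand. -/

import Mathlib

open MeasureTheory ProbabilityTheory Set Filter Real
open scoped NNReal ENNReal Topology

namespace PenalizedAux

lemma gauss_eq (m : ℝ) (v : ℝ≥0) (x : ℝ) :
    gaussianPDFReal m v x = (√(2 * π * v))⁻¹ * rexp (-(2 * (v : ℝ))⁻¹ * (x - m) ^ 2) := by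
  rw [gaussianPDFReal]
  congr 1
  ring

lemma ig0 (m : ℝ) (v : ℝ≥0) : Integrable (gaussianPDFReal m v) :=
  integrable_gaussianPDFReal m v

lemma ig1 (m : ℝ) {v : ℝ≥0} (hv : 0 < v) :
    Integrable (fun x => (x - m) * gaussianPDFReal m v x) := by
  have hb : (0 : ℝ) < (2 * (v : ℝ))⁻¹ := by
    have : (0 : ℝ) < (v : ℝ) := by exact_mod_cast hv
    positivity
  have h := ((integrable_mul_exp_neg_mul_sq hb).comp_sub_right m).const_mul (√(2 * π * (v : ℝ)))⁻¹
  refine h.congr (ae_of_all _ fun x => ?_)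
  simp only [gauss_eq]
  ring

lemma ig2 (m : ℝ) {v : ℝ≥0} (hv : 0 < v) :
    Integrable (fun x => (x - m) ^ 2 * gaussianPDFReal m v x) := by
  have hb : (0 : ℝ) < (2 * (v : ℝ))⁻¹ := by
    have : (0 : ℝ) < (v : ℝ) := by exact_mod_cast hv
    positivity
  have base : Integrable (fun x : ℝ => x ^ 2 * rexp (-(2 * (v : ℝ))⁻¹ * x ^ 2)) := by
    have h := integrable_rpow_mul_exp_neg_mul_sq hb (s := 2) (by norm_num)
    refine h.congr (ae_of_all _ fun x => ?_)
    simp only [Real.rpow_two]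
  have h := (base.comp_sub_right m).const_mul (√(2 * π * (v : ℝ)))⁻¹
  refine h.congr (ae_of_all _ fun x => ?_)
  simp only [gauss_eq]
  ring

/-- Integrability of `(x - t) * φ`. -/
lemma igB (m : ℝ) {v : ℝ≥0} (hv : 0 < v) (t : ℝ) :
    Integrable (fun x => (x - t) * gaussianPDFReal m v x) := by
  have h := (ig1 m hv).add ((ig0 m v).const_mul (m - t))
  refine h.congr (ae_of_all _ fun x => ?_)
  simp only [Pi.add_apply]
  ring

/-- Integrability of `(x - t)^2 * φ`. -/
lemma igA (m : ℝ) {v : ℝ≥0} (hv : 0 < v) (t : ℝ) :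
    Integrable (fun x => (x - t) ^ 2 * gaussianPDFReal m v x) := by
  have h := ((ig2 m hv).add ((ig1 m hv).const_mul (2 * (m - t)))).add
    ((ig0 m v).const_mul ((m - t) ^ 2))
  refine h.congr (ae_of_all _ fun x => ?_)
  simp only [Pi.add_apply]
  ring

/-- Integrability of the Stein integrand. -/
lemma igS (m : ℝ) {v : ℝ≥0} (hv : 0 < v) (t : ℝ) :
    Integrable (fun x => ((x - t) * (x - m) - (v : ℝ)) * gaussianPDFReal m v x) := by
  have h := ((ig2 m hv).add ((ig1 m hv).const_mul (m - t))).add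
    ((ig0 m v).const_mul (-(v : ℝ)))
  refine h.congr (ae_of_all _ fun x => ?_)
  simp only [Pi.add_apply]
  ring

lemma tendsto_gauss (m : ℝ) {v : ℝ≥0} (hv : 0 < v) :
    Tendsto (fun x => gaussianPDFReal m v x) atTop (𝓝 0) ∧
      Tendsto (fun x => (x - m) * gaussianPDFReal m v x) atTop (𝓝 0) := by
  have hb : (0 : ℝ) < (2 * (v : ℝ))⁻¹ := by
    have : (0 : ℝ) < (v : ℝ) := by exact_mod_cast hv
    positivity
  have hhalf : Tendsto (fun x : ℝ => rexp (-(1 / 2) * x)) atTop (𝓝 0) := by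
    have h2 : Tendsto (fun x : ℝ => (1 / 2 : ℝ) * x) atTop atTop := by
      exact Tendsto.const_mul_atTop (by norm_num) tendsto_id
    simpa [Function.comp_def, neg_mul] using Real.tendsto_exp_neg_atTop_nhds_zero.comp h2
  have key : ∀ s : ℝ, Tendsto (fun x : ℝ => x ^ s * rexp (-(2 * (v : ℝ))⁻¹ * x ^ 2)) atTop (𝓝 0) :=
    fun s => (rpow_mul_exp_neg_mul_sq_isLittleO_exp_neg hb s).trans_tendsto hhalf
  have h0 : Tendsto (fun x : ℝ => rexp (-(2 * (v : ℝ))⁻¹ * x ^ 2)) atTop (𝓝 0) := by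
    simpa [Real.rpow_zero] using key 0
  have h1 : Tendsto (fun x : ℝ => x * rexp (-(2 * (v : ℝ))⁻¹ * x ^ 2)) atTop (𝓝 0) := by
    simpa [Real.rpow_one] using key 1
  have hsub : Tendsto (fun x : ℝ => x - m) atTop atTop := tendsto_atTop_add_const_right _ (-m) tendsto_id
  constructor
  · have := (h0.comp hsub).const_mul (√(2 * π * (v : ℝ)))⁻¹
    simp only [mul_zero] at this
    refine this.congr fun x => ?_
    rw [gauss_eq]
    simp [Function.comp_def]
  · have := (h1.comp hsub).const_mul (√(2 * π * (v : ℝ)))⁻¹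
    simp only [mul_zero] at this
    refine this.congr fun x => ?_
    rw [gauss_eq]
    simp only [Function.comp_def]
    ring

lemma gauss_hasDerivAt (m : ℝ) {v : ℝ≥0} (hv : 0 < v) (x : ℝ) :
    HasDerivAt (gaussianPDFReal m v)
      (-((x - m) / (v : ℝ)) * gaussianPDFReal m v x) x := by
  have hvr : (0 : ℝ) < (v : ℝ) := by exact_mod_cast hv
  simp only [gaussianPDFReal_def]
  have h1 : HasDerivAt (fun x : ℝ => -(x - m) ^ 2 / (2 * (v : ℝ))) (-(x - m) / (v : ℝ)) x := by
    have hsq : HasDerivAt (fun x : ℝ => (x - m) ^ 2) (2 * (x - m)) x := by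
      simpa using ((hasDerivAt_id x).sub_const m).fun_pow 2
    have h := (hsq.neg).div_const (2 * (v : ℝ))
    refine h.congr_deriv ?_
    field_simp
  have h2 := (h1.exp).const_mul (√(2 * π * (v : ℝ)))⁻¹
  refine h2.congr_deriv ?_
  ring

lemma stein (m : ℝ) {v : ℝ≥0} (hv : 0 < v) (t : ℝ) :
    ∫ x in Ioi t, ((x - t) * (x - m) - (v : ℝ)) * gaussianPDFReal m v x = 0 := by
  have hvr : (0 : ℝ) < (v : ℝ) := by exact_mod_cast hv
  have hder : ∀ x ∈ Ici t,
      HasDerivAt (fun x => -(v : ℝ) * ((x - t) * gaussianPDFReal m v x))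
        (((x - t) * (x - m) - (v : ℝ)) * gaussianPDFReal m v x) x := by
    intro x _
    have h1 := (((hasDerivAt_id x).sub_const t).mul (gauss_hasDerivAt m hv x)).const_mul (-(v : ℝ))
    refine h1.congr_deriv ?_
    simp only [id_eq]
    field_simp
    ring
  have hlim : Tendsto (fun x => -(v : ℝ) * ((x - t) * gaussianPDFReal m v x)) atTop (𝓝 0) := by
    obtain ⟨h0, h1⟩ := tendsto_gauss m hv
    have := ((h1.add (h0.const_mul (m - t))).const_mul (-(v : ℝ)))
    simp only [mul_zero, add_zero, zero_add] at this
    refine this.congr fun x => ?_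
    ring
  have h := integral_Ioi_of_hasDerivAt_of_tendsto' hder ((igS m hv t).integrableOn) hlim
  simpa using h

/-- The Stein-type decomposition of the second truncated moment. -/
lemma key_identity (m : ℝ) {v : ℝ≥0} (hv : 0 < v) (t : ℝ) :
    ∫ x in Ioi t, (x - t) ^ 2 * gaussianPDFReal m v x
      = (v : ℝ) * (∫ x in Ioi t, gaussianPDFReal m v x)
        + (m - t) * ∫ x in Ioi t, (x - t) * gaussianPDFReal m v x := by
  have e1 : ∫ x in Ioi t, (x - t) ^ 2 * gaussianPDFReal m v x
      = ∫ x in Ioi t, (((x - t) * (x - m) - (v : ℝ)) * gaussianPDFReal m v x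
          + ((v : ℝ) * gaussianPDFReal m v x + (m - t) * ((x - t) * gaussianPDFReal m v x))) := by
    refine integral_congr_ae (ae_of_all _ fun x => ?_)
    ring
  have i1 := igS m hv t
  have i3 : Integrable (fun x => (v : ℝ) * gaussianPDFReal m v x) := (ig0 m v).const_mul _
  have i4 : Integrable (fun x => (m - t) * ((x - t) * gaussianPDFReal m v x)) :=
    (igB m hv t).const_mul _
  have i2 : Integrable (fun x => (v : ℝ) * gaussianPDFReal m v x
      + (m - t) * ((x - t) * gaussianPDFReal m v x)) := by
    have := i3.add i4
    exact this.congr (ae_of_all _ fun x => by simp [Pi.add_apply])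
  rw [e1, integral_add i1.integrableOn i2.integrableOn,
    stein m hv t, integral_add i3.integrableOn i4.integrableOn,
    integral_const_mul, integral_const_mul]
  ring

end PenalizedAux

open PenalizedAux

/-- For a Gaussian random variable `X` with mean `m` and variance `v > 0` and a
strictly positive penalty intensity `α > 0`, every global minimizer `y*` of the
penalized objective `f_α(y) = (m − y)² + v + α·g(y)` with
`g(y) = E[(X − y)² | X > y]` satisfies `y* > m`. -/
theorem penalized_objective_minimizer_above_mean {Ω : Type*} [MeasureSpace Ω]
    (P : Measure Ω) [IsProbabilityMeasure P]
    (X : Ω → ℝ) (hX : Measurable X) (m : ℝ) (v : ℝ≥0) (hv : 0 < v)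
    (hlaw : Measure.map X P = gaussianReal m v)
    (α : ℝ) (hα : 0 < α)
    (g : ℝ → ℝ)
    (hg : ∀ y, g y =
      (∫ ω in {ω | y < X ω}, (X ω - y) ^ 2 ∂P) / (P {ω | y < X ω}).toReal)
    (f : ℝ → ℝ)
    (hf : ∀ y, f y = (m - y) ^ 2 + v + α * g y) :
    ∀ ystar : ℝ, (∀ y : ℝ, f ystar ≤ f y) → m < ystar := by
  intro ystar hmin
  by_contra hcon
  push_neg at hcon
  have hvne : v ≠ 0 := hv.ne'
  have hnonneg : ∀ x, 0 ≤ gaussianPDFReal m v x := gaussianPDFReal_nonneg m v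
  set D : ℝ → ℝ := fun t => ∫ x in Ioi t, gaussianPDFReal m v x with hD
  set B : ℝ → ℝ := fun t => ∫ x in Ioi t, (x - t) * gaussianPDFReal m v x with hB
  -- transfer the probability of the undersupply event
  have hPtoReal : ∀ t : ℝ, (P {ω | t < X ω}).toReal = D t := by
    intro t
    have hset : {ω | t < X ω} = X ⁻¹' (Ioi t) := rfl
    rw [hset, ← Measure.map_apply hX measurableSet_Ioi, hlaw,
      gaussianReal_apply_eq_integral m hvne,
      ENNReal.toReal_ofReal (setIntegral_nonneg measurableSet_Ioi fun x _ => hnonneg x)]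
  -- transfer the numerator
  have hNum : ∀ t : ℝ, ∫ ω in {ω | t < X ω}, (X ω - t) ^ 2 ∂P
      = ∫ x in Ioi t, (x - t) ^ 2 * gaussianPDFReal m v x := by
    intro t
    have hset : {ω | t < X ω} = X ⁻¹' (Ioi t) := rfl
    have hmeas : AEStronglyMeasurable (fun x : ℝ => (x - t) ^ 2) (Measure.map X P) :=
      (Continuous.aestronglyMeasurable (by continuity))
    have h1 := (setIntegral_map (s := Ioi t) (f := fun x : ℝ => (x - t) ^ 2)
      measurableSet_Ioi hmeas hX.aemeasurable).symm
    rw [hset, h1, hlaw, gaussianReal_of_var_ne_zero m hvne]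
    have hpdf : gaussianPDF m v
        = fun x => ((gaussianPDFReal m v x).toNNReal : ℝ≥0∞) := rfl
    rw [hpdf, setIntegral_withDensity_eq_setIntegral_smul
      ((measurable_gaussianPDFReal m v).real_toNNReal) _ measurableSet_Ioi]
    refine setIntegral_congr_fun measurableSet_Ioi fun x _ => ?_
    rw [NNReal.smul_def, smul_eq_mul, Real.coe_toNNReal _ (hnonneg x)]
    ring
  have hD_pos : ∀ t : ℝ, 0 < D t := by
    intro t
    refine (setIntegral_pos_iff_support_of_nonneg_ae
      (ae_of_all _ fun x => hnonneg x) ((ig0 m v).integrableOn)).2 ?_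
    have hsupp : Function.support (gaussianPDFReal m v) = Set.univ :=
      Set.eq_univ_of_forall fun x => (gaussianPDFReal_pos m v x hvne).ne'
    rw [hsupp, Set.univ_inter]
    simp [Real.volume_Ioi]
  have hD_le_one : ∀ t : ℝ, D t ≤ 1 := by
    intro t
    calc D t ≤ ∫ x, gaussianPDFReal m v x :=
          setIntegral_le_integral (ig0 m v) (ae_of_all _ fun x => hnonneg x)
      _ = 1 := integral_gaussianPDFReal_eq_one m hvne
  have hB_nonneg : ∀ t : ℝ, 0 ≤ B t := by
    intro t
    refine setIntegral_nonneg measurableSet_Ioi fun x hx => ?_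
    have : t < x := hx
    exact mul_nonneg (by linarith) (hnonneg x)
  -- the exact expression of g
  have hgid : ∀ t : ℝ, g t = (v : ℝ) + (m - t) * (B t / D t) := by
    intro t
    have hDne : D t ≠ 0 := (hD_pos t).ne'
    have e2 : (∫ x in Ioi t, gaussianPDFReal m v x) = D t := rfl
    have e3 : (∫ x in Ioi t, (x - t) * gaussianPDFReal m v x) = B t := rfl
    rw [hg t, hNum t, hPtoReal t, key_identity m hv t, e2, e3]
    field_simp
  -- quantitative lower bound for B
  set c0 : ℝ := D (m + 2) with hc0def
  have hc0 : 0 < c0 := hD_pos (m + 2)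
  have hBlow : ∀ t : ℝ, t ≤ m + 1 → c0 ≤ B t := by
    intro t ht
    have h1 : c0 ≤ ∫ x in Ioi (m + 2), (x - t) * gaussianPDFReal m v x := by
      refine setIntegral_mono_on ((ig0 m v).integrableOn)
        ((igB m hv t).integrableOn) measurableSet_Ioi fun x hx => ?_
      have hx' : m + 2 < x := hx
      have h1x : (1 : ℝ) ≤ x - t := by linarith
      calc gaussianPDFReal m v x = 1 * gaussianPDFReal m v x := by ring
        _ ≤ (x - t) * gaussianPDFReal m v x :=
            mul_le_mul_of_nonneg_right h1x (hnonneg x)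
    have h2 : ∫ x in Ioi (m + 2), (x - t) * gaussianPDFReal m v x ≤ B t := by
      refine setIntegral_mono_set ((igB m hv t).integrableOn) ?_ ?_
      · refine (ae_restrict_iff' measurableSet_Ioi).2 (ae_of_all _ fun x hx => ?_)
        have : t < x := hx
        exact mul_nonneg (by linarith) (hnonneg x)
      · exact HasSubset.Subset.eventuallyLE (Ioi_subset_Ioi (by linarith))
    linarith
  -- choose ε
  set ε : ℝ := min 1 (α * c0 / 2) with hεdef
  have hε : 0 < ε := lt_min one_pos (by positivity)
  have hε1 : ε ≤ 1 := min_le_left _ _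
  have hεc : ε < α * c0 := lt_of_le_of_lt (min_le_right _ _) (by nlinarith)
  set y0 : ℝ := m + ε with hy0def
  have hq : α * c0 ≤ α * (B y0 / D y0) := by
    have hBy0 : c0 ≤ B y0 := hBlow y0 (by simp only [hy0def]; linarith)
    have hc0D : c0 ≤ B y0 / D y0 := by
      rw [le_div_iff₀ (hD_pos y0)]
      calc c0 * D y0 ≤ c0 * 1 := by
            exact mul_le_mul_of_nonneg_left (hD_le_one y0) hc0.le
        _ = c0 := mul_one c0
        _ ≤ B y0 := hBy0
    exact mul_le_mul_of_nonneg_left hc0D hα.le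
  have hεq : ε < α * (B y0 / D y0) := lt_of_lt_of_le hεc hq
  -- f y0 < v + α v
  have hfy0 : f y0 < (v : ℝ) + α * (v : ℝ) := by
    rw [hf y0, hgid y0]
    have hmy0 : m - y0 = -ε := by simp [hy0def]
    rw [hmy0]
    nlinarith [mul_lt_mul_of_pos_left hεq hε]
  -- f ystar ≥ v + α v
  have hfys : (v : ℝ) + α * (v : ℝ) ≤ f ystar := by
    rw [hf ystar, hgid ystar]
    have hmys : 0 ≤ m - ystar := by linarith
    have h1 : 0 ≤ (m - ystar) * (B ystar / D ystar) :=
      mul_nonneg hmys (div_nonneg (hB_nonneg _) (hD_pos _).le)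
    nlinarith [sq_nonneg (m - ystar), mul_nonneg hα.le h1]
  have := hmin y0
  linarith
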